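/- For integers a ≥ 2 and 1 ≤ k < a/2, the digraph D(a,k) defined as follows is strongly connected, has minimum degree δ(D(a,k)) = a + k, and contains no hamiltonian cycle: colour classes X = R ∪ S and Y = U ∪ W with |R| = |U| = k, |S| = |W| = a − k, and arcs: ry and yr for all r ∈ R, y ∈ Y; ux and xu for all u ∈ U, x ∈ X; and sw for all s ∈ S, w ∈ W. -/

import Mathlib

namespace BipDigraph

variable {V : Type}

/-- Out-degree of `v` in the digraph `(V, A)`. -/
noncomputable def outdeg (A : V → V → Prop) (v : V) : ℕ := Nat.card {w : V // A v w}

/-- In-degree of `v` in the digraph `(V, A)`. -/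
noncomputable def indeg (A : V → V → Prop) (v : V) : ℕ := Nat.card {w : V // A w v}

/-- Degree of `v`: out-degree plus in-degree. -/
noncomputable def deg (A : V → V → Prop) (v : V) : ℕ := outdeg A v + indeg A v

/-- Out-degree of `v` relative to the vertex set `S`. -/
noncomputable def outdegIn (A : V → V → Prop) (S : Set V) (v : V) : ℕ := Nat.card {w : V // w ∈ S ∧ A v w}

/-- In-degree of `v` relative to the vertex set `S`. -/
noncomputable def indegIn (A : V → V → Prop) (S : Set V) (v : V) : ℕ := Nat.card {w : V // w ∈ S ∧ A w v}

/-- Degree of `v` relative to the vertex set `S`. -/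
noncomputable def degIn (A : V → V → Prop) (S : Set V) (v : V) : ℕ := outdegIn A S v + indegIn A S v

/-- The arc `(u,v)` belongs to the matching given by the function `M` on the class `X`. -/
def InM (X : Finset V) (M : V → V) (u v : V) : Prop := u ∈ X ∧ M u = v

/-- The arc `(u,v)` is an arc of the digraph not belonging to the matching. -/
def NotM (A : V → V → Prop) (X : Finset V) (M : V → V) (u v : V) : Prop :=
  A u v ∧ ¬ InM X M u v

/-- `M` is a complete matching from `X` to `Y`: every `x ∈ X` is matched along an arc
to a vertex of `Y`, and the matching arcs are independent. -/
def CompleteMatching (A : V → V → Prop) (X Y : Finset V) (M : V → V) : Prop :=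
  (∀ x ∈ X, M x ∈ Y ∧ A x (M x)) ∧ Set.InjOn M X

/-- Consecutive arcs of the list alternately satisfy `P` and `Q`, starting with `P`. -/
def Alt (P Q : V → V → Prop) : List V → Prop
  | [] => True
  | [_] => True
  | a :: b :: t => P a b ∧ Alt Q P (b :: t)

/-- `p` is an oriented path in `(V, A)` whose arcs are alternately in the matching `M`
(on `X`) and outside of it. -/
def IsCompatPath (A : V → V → Prop) (X : Finset V) (M : V → V) (p : List V) : Prop :=
  p ≠ [] ∧ p.Nodup ∧ p.Chain' A ∧
    (Alt (InM X M) (NotM A X M) p ∨ Alt (NotM A X M) (InM X M) p)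

/-- An `M`-compatible oriented path from `u` to `v`. -/
def IsCompatPathFromTo (A : V → V → Prop) (X : Finset V) (M : V → V)
    (p : List V) (u v : V) : Prop :=
  IsCompatPath A X M p ∧ p.head? = some u ∧ p.getLast? = some v

/-- `p` lists the vertices of an oriented cycle of `(V, A)` in cyclic order;
its length (number of arcs = number of vertices) is `p.length`. -/
def IsCycle (A : V → V → Prop) (p : List V) : Prop :=
  2 ≤ p.length ∧ p.Nodup ∧ ∃ u, p.head? = some u ∧ List.Chain' A (p ++ [u])

/-- `p` is an oriented cycle whose arcs are alternately in the matching `M` (on `X`)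
and outside of it. -/
def IsCompatCycle (A : V → V → Prop) (X : Finset V) (M : V → V) (p : List V) : Prop :=
  2 ≤ p.length ∧ p.Nodup ∧ ∃ u, p.head? = some u ∧ List.Chain' A (p ++ [u]) ∧
    (Alt (InM X M) (NotM A X M) (p ++ [u]) ∨ Alt (NotM A X M) (InM X M) (p ++ [u]))

/-- The digraph `(V, A)` contains an oriented cycle of length `n`. -/
def HasCycleOfLength (A : V → V → Prop) (n : ℕ) : Prop :=
  ∃ p : List V, IsCycle A p ∧ p.length = n

/-- `(V, A)` is a balanced bipartite digraph with colour classes `X`, `Y` of cardinality `a`. -/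
def BalancedBipartite (A : V → V → Prop) (X Y : Finset V) (a : ℕ) : Prop :=
  X.card = a ∧ Y.card = a ∧ Disjoint X Y ∧ (∀ v : V, v ∈ X ∨ v ∈ Y) ∧
    ∀ u v : V, A u v → (u ∈ X ∧ v ∈ Y) ∨ (u ∈ Y ∧ v ∈ X)

/-- Condition (M): `d(u) + d(v) ≥ 3a + 1` for every pair of distinct vertices `u, v`
with no arc between them in either direction. -/
def CondM (A : V → V → Prop) (a : ℕ) : Prop :=
  ∀ u v : V, u ≠ v → ¬ A u v → ¬ A v u → 3 * a + 1 ≤ deg A u + deg A v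

/-- Condition (A): `d(x') + d(y') + d(x'') + d(y'') ≥ 6a + 2` for all pairwise distinct
`x', x'' ∈ X`, `y', y'' ∈ Y` joined by `M`-compatible paths from `x'` to `y'` and from
`x''` to `y''`. -/
def CondA (A : V → V → Prop) (X Y : Finset V) (M : V → V) (a : ℕ) : Prop :=
  ∀ x' x'' y' y'' : V, x' ∈ X → x'' ∈ X → y' ∈ Y → y'' ∈ Y → x' ≠ x'' → y' ≠ y'' →
    (∃ p, IsCompatPathFromTo A X M p x' y') → (∃ p, IsCompatPathFromTo A X M p x'' y'') →
    6 * a + 2 ≤ deg A x' + deg A y' + deg A x'' + deg A y''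

/-- An `M`-compatible cycle all of whose vertices lie in `S`. -/
def IsCompatCycleIn (A : V → V → Prop) (X : Finset V) (M : V → V) (S : Set V)
    (p : List V) : Prop :=
  IsCompatCycle A X M p ∧ ∀ v ∈ p, v ∈ S

/-- An `M`-compatible path from `u` to `v` all of whose vertices lie in `S`. -/
def IsCompatPathFromToIn (A : V → V → Prop) (X : Finset V) (M : V → V) (S : Set V)
    (p : List V) (u v : V) : Prop :=
  IsCompatPathFromTo A X M p u v ∧ ∀ w ∈ p, w ∈ S

/-- The digraph `(V, A)` is strongly connected. -/
def StronglyConnected (A : V → V → Prop) : Prop :=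
  ∀ u v : V, u ≠ v →
    ∃ p : List V, p.Chain' A ∧ p.head? = some u ∧ p.getLast? = some v


lemma outdeg_eq_card {V : Type} [Fintype V] (A : V → V → Prop) (v : V)
    (T : Finset V) (h : ∀ w, A v w ↔ w ∈ T) : outdeg A v = T.card := by
  unfold outdeg
  rw [Nat.card_congr (Equiv.subtypeEquivRight h), Nat.card_eq_fintype_card, Fintype.card_coe]

lemma indeg_eq_card {V : Type} [Fintype V] (A : V → V → Prop) (v : V)
    (T : Finset V) (h : ∀ w, A w v ↔ w ∈ T) : indeg A v = T.card := by
  unfold indeg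
  rw [Nat.card_congr (Equiv.subtypeEquivRight h), Nat.card_eq_fintype_card, Fintype.card_coe]

/-- for `a ≥ 2` and `1 ≤ k < a/2`, the digraph `D(a,k)` with classes
`X = R ∪ S`, `Y = U ∪ W` (`|R| = |U| = k`, `|S| = |W| = a - k`) and arcs `ry`, `yr`
(`r ∈ R`, `y ∈ Y`), `ux`, `xu` (`u ∈ U`, `x ∈ X`) and `sw` (`s ∈ S`, `w ∈ W`) is strongly
connected, has minimum degree `a + k`, and contains no hamiltonian cycle. -/
theorem stmt11 (a k : ℕ) (ha : 2 ≤ a) (hk1 : 1 ≤ k) (hk2 : 2 * k < a)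
    {V : Type} [Fintype V] [DecidableEq V]
    (R S U W : Finset V)
    (hR : R.card = k) (hS : S.card = a - k) (hU : U.card = k) (hW : W.card = a - k)
    (hRS : Disjoint R S) (hUW : Disjoint U W) (hXY : Disjoint (R ∪ S) (U ∪ W))
    (hcover : ∀ v : V, v ∈ R ∪ S ∪ U ∪ W)
    (A : V → V → Prop)
    (hA : ∀ u v : V, A u v ↔
      (u ∈ R ∧ (v ∈ U ∨ v ∈ W)) ∨ ((u ∈ U ∨ u ∈ W) ∧ v ∈ R) ∨
      (u ∈ U ∧ (v ∈ R ∨ v ∈ S)) ∨ ((u ∈ R ∨ u ∈ S) ∧ v ∈ U) ∨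
      (u ∈ S ∧ v ∈ W)) :
    StronglyConnected A ∧ (∀ v : V, a + k ≤ deg A v) ∧ (∃ v : V, deg A v = a + k) ∧
      ¬ HasCycleOfLength A (2 * a) := by
  -- basic disjointness facts
  have dRS := Finset.disjoint_left.mp hRS
  have dUW := Finset.disjoint_left.mp hUW
  have dXY : ∀ x : V, (x ∈ R ∨ x ∈ S) → ¬(x ∈ U ∨ x ∈ W) := by
    intro x hx hy
    exact Finset.disjoint_left.mp hXY (Finset.mem_union.mpr hx) (Finset.mem_union.mpr hy)
  have hkle : k ≤ a := by omega
  -- degree characterizations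
  have charOutR : ∀ v ∈ R, ∀ w, A v w ↔ w ∈ U ∪ W := by
    intro v hv w
    rw [hA, Finset.mem_union]
    have h1 : v ∉ S := fun h => dRS hv h
    have h2 : v ∉ U := fun h => dXY v (Or.inl hv) (Or.inl h)
    have h3 : v ∉ W := fun h => dXY v (Or.inl hv) (Or.inr h)
    constructor
    · rintro (⟨_, h⟩ | ⟨h, _⟩ | ⟨h, _⟩ | ⟨_, h⟩ | ⟨h, _⟩)
      · exact h
      · rcases h with h | h
        · exact (h2 h).elim
        · exact (h3 h).elim
      · exact (h2 h).elim
      · exact Or.inl h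
      · exact (h1 h).elim
    · intro h
      exact Or.inl ⟨hv, h⟩
  have charInR : ∀ v ∈ R, ∀ w, A w v ↔ w ∈ U ∪ W := by
    intro v hv w
    rw [hA, Finset.mem_union]
    have h2 : v ∉ U := fun h => dXY v (Or.inl hv) (Or.inl h)
    have h3 : v ∉ W := fun h => dXY v (Or.inl hv) (Or.inr h)
    constructor
    · rintro (⟨_, h⟩ | ⟨h, _⟩ | ⟨h, _⟩ | ⟨_, h⟩ | ⟨_, h⟩)
      · rcases h with h | h
        · exact (h2 h).elim
        · exact (h3 h).elim
      · exact h
      · exact Or.inl h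
      · exact (h2 h).elim
      · exact (h3 h).elim
    · intro h
      exact Or.inr (Or.inl ⟨h, hv⟩)
  have charOutS : ∀ v ∈ S, ∀ w, A v w ↔ w ∈ U ∪ W := by
    intro v hv w
    rw [hA, Finset.mem_union]
    have h1 : v ∉ R := fun h => dRS h hv
    have h2 : v ∉ U := fun h => dXY v (Or.inr hv) (Or.inl h)
    have h3 : v ∉ W := fun h => dXY v (Or.inr hv) (Or.inr h)
    constructor
    · rintro (⟨h, _⟩ | ⟨h, _⟩ | ⟨h, _⟩ | ⟨_, h⟩ | ⟨_, h⟩)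
      · exact (h1 h).elim
      · rcases h with h | h
        · exact (h2 h).elim
        · exact (h3 h).elim
      · exact (h2 h).elim
      · exact Or.inl h
      · exact Or.inr h
    · rintro (h | h)
      · exact Or.inr (Or.inr (Or.inr (Or.inl ⟨Or.inr hv, h⟩)))
      · exact Or.inr (Or.inr (Or.inr (Or.inr ⟨hv, h⟩)))
  have charInS : ∀ v ∈ S, ∀ w, A w v ↔ w ∈ U := by
    intro v hv w
    rw [hA]
    have h1 : v ∉ R := fun h => dRS h hv
    have h2 : v ∉ U := fun h => dXY v (Or.inr hv) (Or.inl h)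
    have h3 : v ∉ W := fun h => dXY v (Or.inr hv) (Or.inr h)
    constructor
    · rintro (⟨_, h⟩ | ⟨_, h⟩ | ⟨h, _⟩ | ⟨_, h⟩ | ⟨_, h⟩)
      · rcases h with h | h
        · exact (h2 h).elim
        · exact (h3 h).elim
      · exact (h1 h).elim
      · exact h
      · exact (h2 h).elim
      · exact (h3 h).elim
    · intro h
      exact Or.inr (Or.inr (Or.inl ⟨h, Or.inr hv⟩))
  have charOutU : ∀ v ∈ U, ∀ w, A v w ↔ w ∈ R ∪ S := by
    intro v hv w
    rw [hA, Finset.mem_union]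
    have h1 : v ∉ R := fun h => dXY v (Or.inl h) (Or.inl hv)
    have h2 : v ∉ S := fun h => dXY v (Or.inr h) (Or.inl hv)
    have h3 : ∀ x : V, x ∈ U → x ∉ R ∧ x ∉ S :=
      fun x hx => ⟨fun h => dXY x (Or.inl h) (Or.inl hx), fun h => dXY x (Or.inr h) (Or.inl hx)⟩
    have h4 : ∀ x : V, x ∈ W → x ∉ R ∧ x ∉ S :=
      fun x hx => ⟨fun h => dXY x (Or.inl h) (Or.inr hx), fun h => dXY x (Or.inr h) (Or.inr hx)⟩
    constructor
    · rintro (⟨h, _⟩ | ⟨_, h⟩ | ⟨_, h⟩ | ⟨h, _⟩ | ⟨h, _⟩)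
      · exact (h1 h).elim
      · exact Or.inl h
      · exact h
      · rcases h with h | h
        · exact (h1 h).elim
        · exact (h2 h).elim
      · exact (h2 h).elim
    · intro h
      exact Or.inr (Or.inr (Or.inl ⟨hv, h⟩))
  have charInU : ∀ v ∈ U, ∀ w, A w v ↔ w ∈ R ∪ S := by
    intro v hv w
    rw [hA, Finset.mem_union]
    have h1 : v ∉ R := fun h => dXY v (Or.inl h) (Or.inl hv)
    have h2 : v ∉ S := fun h => dXY v (Or.inr h) (Or.inl hv)
    have h3 : v ∉ W := fun h => dUW hv h
    constructor
    · rintro (⟨h, _⟩ | ⟨_, h⟩ | ⟨_, h⟩ | ⟨h, _⟩ | ⟨_, h⟩)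
      · exact Or.inl h
      · exact (h1 h).elim
      · rcases h with h | h
        · exact (h1 h).elim
        · exact (h2 h).elim
      · exact h
      · exact (h3 h).elim
    · intro h
      exact Or.inr (Or.inr (Or.inr (Or.inl ⟨h, hv⟩)))
  have charOutW : ∀ v ∈ W, ∀ w, A v w ↔ w ∈ R := by
    intro v hv w
    rw [hA]
    have h1 : v ∉ R := fun h => dXY v (Or.inl h) (Or.inr hv)
    have h2 : v ∉ S := fun h => dXY v (Or.inr h) (Or.inr hv)
    have h3 : v ∉ U := fun h => dUW h hv
    constructor
    · rintro (⟨h, _⟩ | ⟨_, h⟩ | ⟨h, _⟩ | ⟨h, _⟩ | ⟨h, _⟩)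
      · exact (h1 h).elim
      · exact h
      · exact (h3 h).elim
      · rcases h with h | h
        · exact (h1 h).elim
        · exact (h2 h).elim
      · exact (h2 h).elim
    · intro h
      exact Or.inr (Or.inl ⟨Or.inr hv, h⟩)
  have charInW : ∀ v ∈ W, ∀ w, A w v ↔ w ∈ R ∪ S := by
    intro v hv w
    rw [hA, Finset.mem_union]
    have h1 : v ∉ R := fun h => dXY v (Or.inl h) (Or.inr hv)
    have h2 : v ∉ S := fun h => dXY v (Or.inr h) (Or.inr hv)
    have h3 : v ∉ U := fun h => dUW h hv
    constructor
    · rintro (⟨h, _⟩ | ⟨_, h⟩ | ⟨_, h⟩ | ⟨_, h⟩ | ⟨h, _⟩)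
      · exact Or.inl h
      · exact (h1 h).elim
      · rcases h with h | h
        · exact (h1 h).elim
        · exact (h2 h).elim
      · exact (h3 h).elim
      · exact Or.inr h
    · rintro (h | h)
      · exact Or.inl ⟨h, Or.inr hv⟩
      · exact Or.inr (Or.inr (Or.inr (Or.inr ⟨h, hv⟩)))
  have hUWcard : (U ∪ W).card = a := by
    rw [Finset.card_union_of_disjoint hUW, hU, hW]; omega
  have hRScard : (R ∪ S).card = a := by
    rw [Finset.card_union_of_disjoint hRS, hR, hS]; omega
  have degR : ∀ v ∈ R, deg A v = 2 * a := by
    intro v hv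
    unfold deg
    rw [outdeg_eq_card A v _ (charOutR v hv), indeg_eq_card A v _ (charInR v hv), hUWcard]
    omega
  have degS : ∀ v ∈ S, deg A v = a + k := by
    intro v hv
    unfold deg
    rw [outdeg_eq_card A v _ (charOutS v hv), indeg_eq_card A v _ (charInS v hv), hUWcard, hU]
  have degU : ∀ v ∈ U, deg A v = 2 * a := by
    intro v hv
    unfold deg
    rw [outdeg_eq_card A v _ (charOutU v hv), indeg_eq_card A v _ (charInU v hv), hRScard]
    omega
  have degW : ∀ v ∈ W, deg A v = a + k := by
    intro v hv
    unfold deg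
    rw [outdeg_eq_card A v _ (charOutW v hv), indeg_eq_card A v _ (charInW v hv), hRScard, hR]
    omega
  have hcover' : ∀ v : V, v ∈ R ∨ v ∈ S ∨ v ∈ U ∨ v ∈ W := by
    intro v
    have := hcover v
    simp only [Finset.mem_union] at this
    rcases this with ((h | h) | h) | h
    · exact Or.inl h
    · exact Or.inr (Or.inl h)
    · exact Or.inr (Or.inr (Or.inl h))
    · exact Or.inr (Or.inr (Or.inr h))
  -- hub vertices
  obtain ⟨r₀, hr₀⟩ : R.Nonempty := Finset.card_pos.mp (by omega)
  obtain ⟨u₀, hu₀⟩ : U.Nonempty := Finset.card_pos.mp (by omega)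
  obtain ⟨s₀, hs₀⟩ : S.Nonempty := Finset.card_pos.mp (by omega)
  have hXtoU : ∀ x : V, (x ∈ R ∨ x ∈ S) → A x u₀ := by
    intro x hx; rw [hA]
    exact Or.inr (Or.inr (Or.inr (Or.inl ⟨hx, hu₀⟩)))
  have hUtoX : ∀ x : V, (x ∈ R ∨ x ∈ S) → A u₀ x := by
    intro x hx; rw [hA]
    exact Or.inr (Or.inr (Or.inl ⟨hu₀, hx⟩))
  have hYtoR : ∀ y : V, (y ∈ U ∨ y ∈ W) → A y r₀ := by
    intro y hy; rw [hA]
    exact Or.inr (Or.inl ⟨hy, hr₀⟩)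
  have hRtoY : ∀ y : V, (y ∈ U ∨ y ∈ W) → A r₀ y := by
    intro y hy; rw [hA]
    exact Or.inl ⟨hr₀, hy⟩
  have hUR : A u₀ r₀ := hUtoX r₀ (Or.inl hr₀)
  have hRU : A r₀ u₀ := hRtoY u₀ (Or.inl hu₀)
  refine ⟨?_, ?_, ⟨s₀, degS s₀ hs₀⟩, ?_⟩
  · -- strongly connected
    intro u v _
    have hu := hcover' u
    have hv := hcover' v
    rcases hu with hu | hu | hu | hu <;> rcases hv with hv | hv | hv | hv
    · exact ⟨[u, u₀, v], by simp [List.Chain', List.isChain_cons_cons, hXtoU u (Or.inl hu), hUtoX v (Or.inl hv)],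
        rfl, by simp⟩
    · exact ⟨[u, u₀, v], by simp [List.Chain', List.isChain_cons_cons, hXtoU u (Or.inl hu), hUtoX v (Or.inr hv)],
        rfl, by simp⟩
    · exact ⟨[u, u₀, r₀, v], by simp [List.Chain', List.isChain_cons_cons, hXtoU u (Or.inl hu), hUR,
        hRtoY v (Or.inl hv)], rfl, by simp⟩
    · exact ⟨[u, u₀, r₀, v], by simp [List.Chain', List.isChain_cons_cons, hXtoU u (Or.inl hu), hUR,
        hRtoY v (Or.inr hv)], rfl, by simp⟩
    · exact ⟨[u, u₀, v], by simp [List.Chain', List.isChain_cons_cons, hXtoU u (Or.inr hu), hUtoX v (Or.inl hv)],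
        rfl, by simp⟩
    · exact ⟨[u, u₀, v], by simp [List.Chain', List.isChain_cons_cons, hXtoU u (Or.inr hu), hUtoX v (Or.inr hv)],
        rfl, by simp⟩
    · exact ⟨[u, u₀, r₀, v], by simp [List.Chain', List.isChain_cons_cons, hXtoU u (Or.inr hu), hUR,
        hRtoY v (Or.inl hv)], rfl, by simp⟩
    · exact ⟨[u, u₀, r₀, v], by simp [List.Chain', List.isChain_cons_cons, hXtoU u (Or.inr hu), hUR,
        hRtoY v (Or.inr hv)], rfl, by simp⟩
    · exact ⟨[u, r₀, u₀, v], by simp [List.Chain', List.isChain_cons_cons, hYtoR u (Or.inl hu), hRU,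
        hUtoX v (Or.inl hv)], rfl, by simp⟩
    · exact ⟨[u, r₀, u₀, v], by simp [List.Chain', List.isChain_cons_cons, hYtoR u (Or.inl hu), hRU,
        hUtoX v (Or.inr hv)], rfl, by simp⟩
    · exact ⟨[u, r₀, v], by simp [List.Chain', List.isChain_cons_cons, hYtoR u (Or.inl hu), hRtoY v (Or.inl hv)],
        rfl, by simp⟩
    · exact ⟨[u, r₀, v], by simp [List.Chain', List.isChain_cons_cons, hYtoR u (Or.inl hu), hRtoY v (Or.inr hv)],
        rfl, by simp⟩
    · exact ⟨[u, r₀, u₀, v], by simp [List.Chain', List.isChain_cons_cons, hYtoR u (Or.inr hu), hRU,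
        hUtoX v (Or.inl hv)], rfl, by simp⟩
    · exact ⟨[u, r₀, u₀, v], by simp [List.Chain', List.isChain_cons_cons, hYtoR u (Or.inr hu), hRU,
        hUtoX v (Or.inr hv)], rfl, by simp⟩
    · exact ⟨[u, r₀, v], by simp [List.Chain', List.isChain_cons_cons, hYtoR u (Or.inr hu), hRtoY v (Or.inl hv)],
        rfl, by simp⟩
    · exact ⟨[u, r₀, v], by simp [List.Chain', List.isChain_cons_cons, hYtoR u (Or.inr hu), hRtoY v (Or.inr hv)],
        rfl, by simp⟩
  · -- min degree
    intro v
    rcases hcover' v with hv | hv | hv | hv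
    · rw [degR v hv]; omega
    · rw [degS v hv]
    · rw [degU v hv]; omega
    · rw [degW v hv]
  · -- no hamiltonian cycle
    rintro ⟨p, ⟨hlen2, hnd, u, hhead, hchain⟩, hplen⟩
    have hpne : p ≠ [] := by
      intro h; rw [h] at hlen2; simp at hlen2
    have hcardV : Fintype.card V = 2 * a := by
      have huniv : (Finset.univ : Finset V) = R ∪ S ∪ U ∪ W := by
        ext v; simpa using hcover v
      have d1 : Disjoint (R ∪ S) U :=
        hXY.mono_right (Finset.subset_union_left)
      have d2 : Disjoint (R ∪ S ∪ U) W :=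
        Finset.disjoint_union_left.mpr
          ⟨hXY.mono_right (Finset.subset_union_right), hUW⟩
      rw [← Finset.card_univ, huniv, Finset.card_union_of_disjoint d2,
        Finset.card_union_of_disjoint d1, Finset.card_union_of_disjoint hRS,
        hR, hS, hU, hW]
      omega
    have hmem : ∀ v : V, v ∈ p := by
      intro v
      have : p.toFinset = Finset.univ :=
        Finset.eq_univ_of_card _ (by rw [List.toFinset_card_of_nodup hnd, hplen, hcardV])
      rw [← List.mem_toFinset, this]
      exact Finset.mem_univ v
    set n := p.length with hn
    have hqlen : (p ++ [u]).length = n + 1 := by simp; omega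
    have hu0 : p[0]'(by omega) = u := by
      have := List.head?_eq_head hpne
      rw [hhead] at this
      rw [List.getElem_zero]
      exact (Option.some_injective _ this.symm)
    -- successor function
    have harcs : ∀ (i : ℕ) (hi : i + 1 < n + 1),
        A (p[i]'(by omega)) ((p ++ [u])[i+1]'(by omega)) := by
      intro i hi
      have := List.isChain_iff_getElem.mp hchain i (by simp; omega)
      simpa [List.get_eq_getElem, List.getElem_append_left (show i < p.length by omega)]
        using this
    have hqinj : ∀ (j j' : ℕ) (hj : 1 ≤ j) (hj' : 1 ≤ j') (hjn : j ≤ n) (hjn' : j' ≤ n),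
        (p ++ [u])[j]'(by omega) = (p ++ [u])[j']'(by omega) → j = j' := by
      have key : ∀ (j : ℕ) (hj1 : 1 ≤ j) (hjn : j ≤ n) (hj : j < n),
          (p ++ [u])[j]'(by omega) = p[j]'(by omega) :=
        fun j _ _ hj => List.getElem_append_left hj
      have keyn : (p ++ [u])[n]'(by omega) = p[0]'(by omega) := by
        rw [List.getElem_append_right (le_refl n)]
        simp [hu0]
      intro j j' hj hj' hjn hjn' heq
      rcases lt_or_eq_of_le hjn with hlt | hje <;> rcases lt_or_eq_of_le hjn' with hlt' | hje'
      · rw [key j hj hjn hlt, key j' hj' hjn' hlt'] at heq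
        exact (hnd.getElem_inj_iff).mp heq
      · subst hje'
        rw [key j hj hjn hlt, keyn] at heq
        have := (hnd.getElem_inj_iff).mp heq
        omega
      · subst hje
        rw [keyn, key j' hj' hjn' hlt'] at heq
        have := (hnd.getElem_inj_iff).mp heq
        omega
      · omega
    classical
    set f : V → V := fun w => (p ++ [u]).getD (p.idxOf w + 1) u with hf
    have hidx : ∀ w : V, p.idxOf w < n := fun w => List.idxOf_lt_length_iff.mpr (hmem w)
    have hfval : ∀ w : V, f w = (p ++ [u])[p.idxOf w + 1]'(by
        rw [hqlen]; have := hidx w; omega) := by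
      intro w
      rw [hf]
      exact List.getD_eq_getElem _ _ _
    have hfR : ∀ w ∈ W, f w ∈ R := by
      intro w hw
      have hi := hidx w
      have harc := harcs (p.idxOf w) (by omega)
      rw [List.getElem_idxOf (by omega)] at harc
      rw [hfval w]
      exact (charOutW w hw _).mp harc
    have hfinj : Set.InjOn f ↑W := by
      intro w hw w' hw' heq
      rw [hfval w, hfval w'] at heq
      have hi := hidx w
      have hi' := hidx w'
      have := hqinj (p.idxOf w + 1) (p.idxOf w' + 1) (by omega) (by omega)
        (by omega) (by omega) heq
      have hii : p.idxOf w = p.idxOf w' := by omega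
      exact (List.idxOf_inj (hmem w)).mp hii
    have hle : W.card ≤ R.card := Finset.card_le_card_of_injOn f hfR hfinj
    rw [hW, hR] at hle
    omega

end BipDigraph
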